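/- Stationary symmetric Poisson revelation is optimal at the steady-state belief pair: assume δ_A > δ_P > 0, μ_A ∈ (0,1), and μ_P = μ_A + μ_A(1-μ_A)·v'(μ_A)/(v(μ_A) + (δ_P/(δ_A-δ_P))·v(1)) with μ_P ∈ (0,1). Let λ = δ_A·v(μ_A)/(v(1)-v(μ_A)) (equivalently (λ/(λ+δ_A))·v(1) = v(μ_A)). Then the pair G_1*(t) = μ_P·e^{-λt}, G_0*(t) = (1-μ_P)·e^{-λt} is feasible for the engagement problem (P), with the obedience constraint holding with equality at every t, and every feasible pair (G_1,G_0) satisfies J(G_1,G_0) ≤ J(G_1*,G_0*). -/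

import Mathlib

open MeasureTheory Set

noncomputable section

/-- The principal's objective in the engagement problem (P). -/
def J (δP : ℝ) (G1 G0 : ℝ → ℝ) : ℝ :=
  ∫ t in Ioi (0:ℝ), Real.exp (-δP * t) * (G1 t + G0 t)

/-- Feasibility for the engagement problem (P): `G1` and `G0` are nonnegative and
nonincreasing engagement probability functions with the given initial conditions,
satisfying the agent's obedience constraint at every time `t ≥ 0`. -/
def Feasible (v : ℝ → ℝ) (δA ℓ μP : ℝ) (G1 G0 : ℝ → ℝ) : Prop :=
  (∀ t, 0 ≤ t → 0 ≤ G1 t) ∧ (∀ t, 0 ≤ t → 0 ≤ G0 t) ∧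
  (∀ s t, 0 ≤ s → s ≤ t → G1 t ≤ G1 s) ∧
  (∀ s t, 0 ≤ s → s ≤ t → G0 t ≤ G0 s) ∧
  G1 0 = μP ∧ G0 0 = 1 - μP ∧
  (∀ t, 0 ≤ t → 0 < ℓ * G1 t + G0 t →
    v 1 * (ℓ * G1 t + G0 t)
        - δA * v 1 * ∫ s in Ioi t, (ℓ * G1 s + G0 s) * Real.exp (-δA * (s - t))
      ≥ (ℓ * G1 t + G0 t) * v (ℓ * G1 t / (ℓ * G1 t + G0 t)))

lemma exp_int (k : ℝ) (hk : 0 < k) (t : ℝ) :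
    ∫ s in Ioi t, Real.exp (-k * s) = Real.exp (-k * t) / k := by
  have hd : ∀ x ∈ Ici t, HasDerivAt (fun s => -Real.exp (-k * s) / k) (Real.exp (-k * x)) x := by
    intro x _
    have h1 : HasDerivAt (fun s => -k * s) (-k) x := by
      simpa using (hasDerivAt_id x).const_mul (-k)
    have := (h1.exp.neg).div_const k
    simpa [mul_comm, mul_div_assoc, hk.ne'] using this
  have hi : IntegrableOn (fun s => Real.exp (-k * s)) (Ioi t) := exp_neg_integrableOn_Ioi t hk
  have ht : Filter.Tendsto (fun s => -Real.exp (-k * s) / k) Filter.atTop (nhds (-0 / k)) := by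
    refine Filter.Tendsto.div_const (Filter.Tendsto.neg ?_) _
    exact Real.tendsto_exp_atBot.comp
      (Filter.tendsto_id.const_mul_atTop_of_neg (neg_neg_iff_pos.2 hk))
  have := integral_Ioi_of_hasDerivAt_of_tendsto' hd hi ht
  rw [this]; ring

lemma swap_lemma (γ δ C : ℝ) (hγ : 0 < γ) (hδ : γ < δ) (f : ℝ → ℝ)
    (hf : Measurable f) (h0 : ∀ s, 0 ≤ f s) (hC : ∀ s, f s ≤ C * Real.exp (-δ * s)) :
    ∫ t in Ioi (0:ℝ), Real.exp (γ * t) * (∫ s in Ioi t, f s) =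
      ∫ s in Ioi (0:ℝ), f s * ((Real.exp (γ * s) - 1) / γ) := by
  have hC0 : 0 ≤ C := by
    have := (h0 0).trans (hC 0)
    simpa using this
  set F : ℝ → ℝ → ℝ := fun t s => if t < s then Real.exp (γ * t) * f s else 0 with hF
  set ε : ℝ := (δ - γ) / 2 with hε
  have hε0 : 0 < ε := by rw [hε]; linarith
  have hmeas : Measurable (Function.uncurry F) := by
    have h1 : MeasurableSet {p : ℝ × ℝ | p.1 < p.2} :=
      measurableSet_lt measurable_fst measurable_snd
    have h2 : Measurable (fun p : ℝ × ℝ => Real.exp (γ * p.1) * f p.2) :=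
      ((Real.measurable_exp.comp (measurable_fst.const_mul γ))).mul (hf.comp measurable_snd)
    exact Measurable.ite h1 h2 measurable_const
  have hint : Integrable (Function.uncurry F)
      ((volume.restrict (Ioi (0:ℝ))).prod (volume.restrict (Ioi (0:ℝ)))) := by
    have hb : Integrable (fun p : ℝ × ℝ => (Real.exp (-ε * p.1)) * (C * Real.exp (-ε * p.2)))
        ((volume.restrict (Ioi (0:ℝ))).prod (volume.restrict (Ioi (0:ℝ)))) :=
      Integrable.mul_prod (exp_neg_integrableOn_Ioi 0 hε0)
        ((exp_neg_integrableOn_Ioi 0 hε0).const_mul C)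
    refine hb.mono' hmeas.aestronglyMeasurable ?_
    refine Filter.Eventually.of_forall ?_
    rintro ⟨t, s⟩
    simp only [Function.uncurry, hF]
    rw [Real.norm_eq_abs]
    by_cases h : t < s
    · rw [if_pos h, abs_of_nonneg (mul_nonneg (Real.exp_pos _).le (h0 s))]
      have h1 : f s ≤ C * Real.exp (-δ * s) := hC s
      have h2 : Real.exp (γ * t) * f s ≤ Real.exp (γ * t) * (C * Real.exp (-δ * s)) :=
        mul_le_mul_of_nonneg_left h1 (Real.exp_pos _).le
      refine h2.trans ?_
      rw [show Real.exp (-ε * t) * (C * Real.exp (-ε * s))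
            = C * (Real.exp (-ε * t) * Real.exp (-ε * s)) by ring,
        show Real.exp (γ * t) * (C * Real.exp (-δ * s))
            = C * (Real.exp (γ * t) * Real.exp (-δ * s)) by ring]
      refine mul_le_mul_of_nonneg_left ?_ hC0
      rw [← Real.exp_add, ← Real.exp_add]
      refine Real.exp_le_exp.2 ?_
      have hts := mul_le_mul_of_nonneg_left h.le (show (0:ℝ) ≤ (γ + δ)/2 by linarith)
      rw [hε]; linarith
    · rw [if_neg h, abs_zero]; positivity
  have hswap := integral_integral_swap (f := F) hint
  have hleft : ∀ t ∈ Ioi (0:ℝ),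
      (∫ s in Ioi (0:ℝ), F t s) = Real.exp (γ * t) * (∫ s in Ioi t, f s) := by
    intro t ht
    have : (fun s => F t s) = (Ioi t).indicator (fun s => Real.exp (γ * t) * f s) := by
      funext s
      by_cases h : t < s
      · simp [hF, h, indicator_of_mem, mem_Ioi]
      · simp [hF, h, indicator_of_notMem, mem_Ioi]
    rw [this, integral_indicator measurableSet_Ioi,
      Measure.restrict_restrict measurableSet_Ioi]
    have hsub : Ioi t ∩ Ioi (0:ℝ) = Ioi t := by
      apply inter_eq_left.2; intro x hx
      exact lt_trans (mem_Ioi.1 ht) (mem_Ioi.1 hx)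
    rw [hsub, integral_const_mul]
  have hright : ∀ s ∈ Ioi (0:ℝ),
      (∫ t in Ioi (0:ℝ), F t s) = f s * ((Real.exp (γ * s) - 1) / γ) := by
    intro s hs
    have : (fun t => F t s) = (Iio s).indicator (fun t => Real.exp (γ * t) * f s) := by
      funext t
      by_cases h : t < s
      · simp [hF, h, indicator_of_mem, mem_Iio]
      · simp [hF, h, indicator_of_notMem, mem_Iio]
    rw [this, integral_indicator measurableSet_Iio,
      Measure.restrict_restrict measurableSet_Iio]
    have hsub : Iio s ∩ Ioi (0:ℝ) = Ioo 0 s := by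
      ext x; simp [mem_Ioo, and_comm]
    rw [hsub]
    rw [← integral_Ioc_eq_integral_Ioo, ← intervalIntegral.integral_of_le (le_of_lt hs)]
    have hderiv : ∀ x ∈ uIcc (0:ℝ) s,
        HasDerivAt (fun u => Real.exp (γ * u) / γ * f s) (Real.exp (γ * x) * f s) x := by
      intro x _
      have h1 : HasDerivAt (fun u => γ * u) γ x := by simpa using (hasDerivAt_id x).const_mul γ
      have := (h1.exp.div_const γ).mul_const (f s)
      simpa [mul_comm, mul_div_assoc, hγ.ne'] using this
    have hcont : IntervalIntegrable (fun x => Real.exp (γ * x) * f s) volume 0 s :=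
      Continuous.intervalIntegrable (by continuity) 0 s
    rw [intervalIntegral.integral_eq_sub_of_hasDerivAt hderiv hcont]
    simp; ring
  calc ∫ t in Ioi (0:ℝ), Real.exp (γ * t) * (∫ s in Ioi t, f s)
      = ∫ t in Ioi (0:ℝ), (∫ s in Ioi (0:ℝ), F t s) :=
        (setIntegral_congr_fun measurableSet_Ioi (fun t ht => hleft t ht)).symm
    _ = ∫ s in Ioi (0:ℝ), (∫ t in Ioi (0:ℝ), F t s) := hswap
    _ = ∫ s in Ioi (0:ℝ), f s * ((Real.exp (γ * s) - 1) / γ) :=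
        setIntegral_congr_fun measurableSet_Ioi (fun s hs => hright s hs)

set_option maxHeartbeats 1000000 in
/-- **Stationary symmetric Poisson revelation is optimal at the steady-state belief
pair.** If `δA > δP > 0` and `μP = μA + μA(1-μA) v'(μA)/(v(μA) + (δP/(δA-δP)) v(1))`,
then revealing both states at the constant Poisson rate `λ = δA v(μA)/(v(1)-v(μA))`
(so `G₁*(t) = μP e^{-λt}`, `G₀*(t) = (1-μP) e^{-λt}`) is feasible, satisfies the
obedience constraint with equality at every `t ≥ 0`, and is optimal. -/
theorem stationary_poisson_optimal
    (v v' : ℝ → ℝ) (δA δP μA μP : ℝ)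
    (hδP : 0 < δP) (hδ : δP < δA)
    (hμA : μA ∈ Ioo (0:ℝ) 1)
    (hconv : StrictConvexOn ℝ (Icc (0:ℝ) 1) v)
    (hderiv : ∀ x ∈ Icc (0:ℝ) 1, HasDerivWithinAt v (v' x) (Icc (0:ℝ) 1) x)
    (hpos : ∀ x ∈ Icc (0:ℝ) 1, 0 < v x)
    (hsymm : ∀ x ∈ Icc (0:ℝ) 1, v x = v (1 - x))
    (hμP : μP = μA + μA * (1 - μA) * v' μA / (v μA + (δP / (δA - δP)) * v 1))
    (hμP01 : μP ∈ Ioo (0:ℝ) 1) :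
    let ℓ : ℝ := μA * (1 - μP) / ((1 - μA) * μP)
    let lam : ℝ := δA * v μA / (v 1 - v μA)
    let G1s : ℝ → ℝ := fun t => μP * Real.exp (-lam * t)
    let G0s : ℝ → ℝ := fun t => (1 - μP) * Real.exp (-lam * t)
    Feasible v δA ℓ μP G1s G0s ∧
    (∀ t : ℝ, 0 ≤ t →
      v 1 * (ℓ * G1s t + G0s t)
          - δA * v 1 * ∫ s in Ioi t, (ℓ * G1s s + G0s s) * Real.exp (-δA * (s - t))
        = (ℓ * G1s t + G0s t) * v (ℓ * G1s t / (ℓ * G1s t + G0s t))) ∧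
    ∀ G1 G0, Feasible v δA ℓ μP G1 G0 → J δP G1 G0 ≤ J δP G1s G0s := by
  intro ℓ lam G1s G0s
  obtain ⟨hμA0, hμA1⟩ := hμA
  obtain ⟨hμP0, hμP1⟩ := hμP01
  have hℓdef : ℓ = μA * (1 - μP) / ((1 - μA) * μP) := rfl
  have hlamdef : lam = δA * v μA / (v 1 - v μA) := rfl
  have hG1sdef : ∀ t, G1s t = μP * Real.exp (-lam * t) := fun _ => rfl
  have hG0sdef : ∀ t, G0s t = (1 - μP) * Real.exp (-lam * t) := fun _ => rfl
  clear_value ℓ lam G1s G0s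
  have hδA : (0:ℝ) < δA := lt_trans hδP hδ
  have hγ : (0:ℝ) < δA - δP := by linarith
  have hmemA : μA ∈ Icc (0:ℝ) 1 := ⟨hμA0.le, hμA1.le⟩
  have hmem0 : (0:ℝ) ∈ Icc (0:ℝ) 1 := by norm_num
  have hmem1 : (1:ℝ) ∈ Icc (0:ℝ) 1 := by norm_num
  have hv1 : 0 < v 1 := hpos 1 hmem1
  have hvA : 0 < v μA := hpos μA hmemA
  have hv0 : v 0 = v 1 := by simpa using hsymm 0 hmem0
  have hgap : v μA < v 1 := by
    have h := hconv.2 hmem0 hmem1 (by norm_num)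
      (show 0 < 1 - μA by linarith) hμA0 (by ring)
    simp only [smul_eq_mul, mul_zero, mul_one, zero_add] at h
    rw [hv0] at h
    nlinarith [h]
  have hℓ : 0 < ℓ := by
    rw [hℓdef]
    exact div_pos (mul_pos hμA0 (by linarith)) (mul_pos (by linarith) hμP0)
  have hlam : 0 < lam := by
    rw [hlamdef]; exact div_pos (mul_pos hδA hvA) (by linarith)
  have hℓval : ℓ * ((1 - μA) * μP) = μA * (1 - μP) := by
    rw [hℓdef]
    exact div_mul_cancel₀ _ (mul_pos (by linarith : (0:ℝ) < 1 - μA) hμP0).ne'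
  have hlamval : lam * (v 1 - v μA) = δA * v μA := by
    rw [hlamdef]
    exact div_mul_cancel₀ _ (by intro h; linarith [sub_eq_zero.1 h] : v 1 - v μA ≠ 0)
  set d := v' μA with hd
  clear_value d
  have hID : (μP - μA) * (δP * v 1 + (δA - δP) * v μA)
      = (δA - δP) * (μA * (1 - μA) * d) := by
    have hden : 0 < v μA + δP / (δA - δP) * v 1 := by
      have : 0 < δP / (δA - δP) * v 1 := mul_pos (div_pos hδP hγ) hv1
      linarith
    rw [hμP]
    field_simp
    ring
  -- stationary solution facts
  set K := ℓ * μP + (1 - μP) with hK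
  clear_value K
  have hK0 : 0 < K := by
    rw [hK]; have := mul_pos hℓ hμP0; linarith
  have hKμ : ℓ * μP = μA * K := by
    have h2 : ℓ * μP * (1 - μA) = μA * K * (1 - μA) := by
      rw [hK]; linear_combination (1 - μA) * hℓval
    exact mul_right_cancel₀ (by linarith : (1:ℝ) - μA ≠ 0) h2
  have hsum : ∀ x : ℝ, ℓ * G1s x + G0s x = K * Real.exp (-lam * x) := by
    intro x; rw [hG1sdef x, hG0sdef x, hK]; ring
  have hIint : ∀ t : ℝ, (∫ s in Ioi t, (ℓ * G1s s + G0s s) * Real.exp (-δA * (s - t)))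
      = K * Real.exp (-lam * t) / (lam + δA) := by
    intro t
    have h1 : ∀ s : ℝ, (ℓ * G1s s + G0s s) * Real.exp (-δA * (s - t))
        = (K * Real.exp (δA * t)) * Real.exp (-(lam + δA) * s) := by
      intro s
      rw [hsum s, show (-(lam + δA) * s) = (-lam * s) + (-δA * s) by ring, Real.exp_add,
        show (-δA * (s - t)) = (δA * t) + (-δA * s) by ring, Real.exp_add]
      ring
    simp_rw [h1]
    rw [integral_const_mul, exp_int (lam + δA) (by linarith) t]
    rw [show Real.exp (-(lam + δA) * t) = Real.exp (-lam * t) * Real.exp (-δA * t) by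
      rw [← Real.exp_add]; congr 1; ring]
    have hE : Real.exp (δA * t) * Real.exp (-δA * t) = 1 := by
      rw [← Real.exp_add]; norm_num
    calc K * Real.exp (δA * t) * (Real.exp (-lam * t) * Real.exp (-δA * t) / (lam + δA))
        = K * Real.exp (-lam * t) * (Real.exp (δA * t) * Real.exp (-δA * t)) / (lam + δA) := by
          ring
      _ = K * Real.exp (-lam * t) / (lam + δA) := by rw [hE, mul_one]
  have hratio : ∀ t : ℝ, ℓ * G1s t / (ℓ * G1s t + G0s t) = μA := by
    intro t
    have e0 : (0:ℝ) < K * Real.exp (-lam * t) := mul_pos hK0 (Real.exp_pos _)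
    have h1 : ℓ * G1s t = μA * (K * Real.exp (-lam * t)) := by
      rw [hG1sdef t, ← mul_assoc, hKμ]; ring
    rw [hsum t, h1, mul_div_assoc, div_self e0.ne', mul_one]
  have hEqOb : ∀ t : ℝ, 0 ≤ t →
      v 1 * (ℓ * G1s t + G0s t)
          - δA * v 1 * ∫ s in Ioi t, (ℓ * G1s s + G0s s) * Real.exp (-δA * (s - t))
        = (ℓ * G1s t + G0s t) * v (ℓ * G1s t / (ℓ * G1s t + G0s t)) := by
    intro t _
    rw [hIint t, hratio t, hsum t]
    have hld : (0:ℝ) < lam + δA := by linarith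
    set e := Real.exp (-lam * t) with he
    field_simp
    linear_combination e * hlamval
  have hFeas : Feasible v δA ℓ μP G1s G0s := by
    refine ⟨?_, ?_, ?_, ?_, ?_, ?_, ?_⟩
    · intro t _; rw [hG1sdef t]; exact mul_nonneg hμP0.le (Real.exp_pos _).le
    · intro t _; rw [hG0sdef t]; exact mul_nonneg (by linarith) (Real.exp_pos _).le
    · intro s t _ hst
      rw [hG1sdef t, hG1sdef s]
      exact mul_le_mul_of_nonneg_left
        (Real.exp_le_exp.2 (by linarith [mul_le_mul_of_nonneg_left hst hlam.le])) hμP0.le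
    · intro s t _ hst
      rw [hG0sdef t, hG0sdef s]
      exact mul_le_mul_of_nonneg_left
        (Real.exp_le_exp.2 (by linarith [mul_le_mul_of_nonneg_left hst hlam.le]))
        (by linarith)
    · rw [hG1sdef 0]; simp
    · rw [hG0sdef 0]; simp
    · intro t ht _; exact ge_of_eq (hEqOb t ht)
  -- value of the stationary objective
  have hJs : J δP G1s G0s = 1 / (δP + lam) := by
    simp only [J]
    have h1 : ∀ t : ℝ, Real.exp (-δP * t) * (G1s t + G0s t)
        = Real.exp (-(δP + lam) * t) := by
      intro t
      rw [hG1sdef t, hG0sdef t,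
        show (-(δP + lam) * t) = (-δP * t) + (-lam * t) by ring, Real.exp_add]
      ring
    simp_rw [h1]
    rw [exp_int (δP + lam) (by linarith) 0]
    norm_num
  -- dual coefficients
  set A := ℓ * (v 1 - v μA - (1 - μA) * d) with hA
  set B := (v 1 - v μA) + μA * d with hB
  set D := δA * v 1 - (δA - δP) * B with hD
  clear_value A B D
  have hDalt : D = (δP * v 1 + (δA - δP) * v μA) - (δA - δP) * (μA * d) := by
    rw [hD, hB]; ring
  have hD'eq : ℓ * (δA * v 1) - (δA - δP) * A = D := by
    have h2 : (ℓ * (δA * v 1) - (δA - δP) * A) * ((1 - μA) * μP) = D * ((1 - μA) * μP) := by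
      rw [hA, hDalt]
      linear_combination (δP * v 1 + (δA - δP) * v μA + (δA - δP) * (1 - μA) * d) * hℓval - hID
    exact mul_right_cancel₀ (mul_pos (by linarith : (0:ℝ) < 1 - μA) hμP0).ne' h2
  have hDpos : 0 < D := by
    rcases le_or_gt 0 d with hd0 | hd0
    · have h3 : D = ℓ * ((δP * v 1 + (δA - δP) * v μA) + (δA - δP) * (1 - μA) * d) := by
        rw [← hD'eq, hA]; ring
      rw [h3]
      apply mul_pos hℓ
      nlinarith [mul_pos hδP hv1, mul_pos hγ hvA,
        mul_nonneg (mul_nonneg hγ.le (by linarith : (0:ℝ) ≤ 1 - μA)) hd0]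
    · rw [hDalt]
      nlinarith [mul_pos hδP hv1, mul_pos hγ hvA,
        mul_pos hγ (mul_pos hμA0 (neg_pos.2 hd0))]
  set w0 := 1 / D with hw0
  clear_value w0
  have hw0pos : 0 < w0 := by rw [hw0]; exact one_div_pos.2 hDpos
  have hw2 : w0 * (δA * v 1 - (δA - δP) * B) = 1 := by
    rw [hw0, ← hD]; field_simp
  have hw1 : w0 * (ℓ * (δA * v 1) - (δA - δP) * A) = 1 := by
    rw [hD'eq, hw0]; field_simp
  have hfinal : w0 * (A * μP + B * (1 - μP)) = 1 / (δP + lam) := by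
    have hXval : (A * μP + B * (1 - μP)) * (1 - μA) = (1 - μP) * (v 1 - v μA) := by
      rw [hA, hB]
      linear_combination (v 1 - v μA - (1 - μA) * d) * hℓval
    have hcross : (1 - μP) * (v 1 - v μA) * (δP + lam) = D * (1 - μA) := by
      rw [hDalt]
      linear_combination (1 - μP) * hlamval - hID
    have hld : (0:ℝ) < δP + lam := by linarith
    rw [hw0, div_mul_eq_mul_div, one_mul, div_eq_div_iff hDpos.ne' hld.ne']
    have h5 : ((A * μP + B * (1 - μP)) * (δP + lam)) * (1 - μA) = (D * 1) * (1 - μA) := by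
      linear_combination (δP + lam) * hXval + hcross
    have h6 := mul_right_cancel₀ (by linarith : (1:ℝ) - μA ≠ 0) h5
    linarith [h6]
  -- optimality
  have hOpt : ∀ G1 G0, Feasible v δA ℓ μP G1 G0 → J δP G1 G0 ≤ J δP G1s G0s := by
    intro G1 G0 hfeas
    obtain ⟨hG1n, hG0n, hG1m, hG0m, hG10, hG00, hOb⟩ := hfeas
    set g1 : ℝ → ℝ := fun t => G1 (max t 0) with hg1
    set g0 : ℝ → ℝ := fun t => G0 (max t 0) with hg0
    have hg1anti : Antitone g1 := fun s t hst => hG1m _ _ (le_max_right s 0) (max_le_max hst le_rfl)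
    have hg0anti : Antitone g0 := fun s t hst => hG0m _ _ (le_max_right s 0) (max_le_max hst le_rfl)
    have hg1meas : Measurable g1 := hg1anti.measurable
    have hg0meas : Measurable g0 := hg0anti.measurable
    have hg1nn : ∀ t, 0 ≤ g1 t := fun t => hG1n _ (le_max_right t 0)
    have hg0nn : ∀ t, 0 ≤ g0 t := fun t => hG0n _ (le_max_right t 0)
    have hg1le : ∀ t, g1 t ≤ μP := fun t => hG10 ▸ hG1m 0 (max t 0) le_rfl (le_max_right t 0)
    have hg0le : ∀ t, g0 t ≤ 1 - μP := fun t => hG00 ▸ hG0m 0 (max t 0) le_rfl (le_max_right t 0)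
    have hg1eq : ∀ t, 0 ≤ t → g1 t = G1 t := fun t ht => by
      rw [hg1]; simp [max_eq_left ht]
    have hg0eq : ∀ t, 0 ≤ t → g0 t = G0 t := fun t ht => by
      rw [hg0]; simp [max_eq_left ht]
    set gA : ℝ → ℝ := fun t => ℓ * g1 t + g0 t with hgAdef
    have hgAt : ∀ t, gA t = ℓ * g1 t + g0 t := fun _ => rfl
    have hgAnn : ∀ t, 0 ≤ gA t := fun t => add_nonneg (mul_nonneg hℓ.le (hg1nn t)) (hg0nn t)
    have hgAle : ∀ t, gA t ≤ K := by
      intro t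
      rw [hgAt, hK]
      exact add_le_add (mul_le_mul_of_nonneg_left (hg1le t) hℓ.le) (hg0le t)
    have hgAanti : Antitone gA := fun s t hst =>
      add_le_add (mul_le_mul_of_nonneg_left (hg1anti hst) hℓ.le) (hg0anti hst)
    have hgAmeas : Measurable gA := (hg1meas.const_mul ℓ).add hg0meas
    set f : ℝ → ℝ := fun s => gA s * Real.exp (-δA * s) with hfdef
    have hfmeas : Measurable f :=
      hgAmeas.mul (Real.measurable_exp.comp (measurable_id.const_mul (-δA)))
    have hfnn : ∀ s, 0 ≤ f s := fun s => mul_nonneg (hgAnn s) (Real.exp_pos _).le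
    have hfbd : ∀ s, f s ≤ K * Real.exp (-δA * s) := fun s =>
      mul_le_mul_of_nonneg_right (hgAle s) (Real.exp_pos _).le
    have hfint : ∀ t : ℝ, IntegrableOn f (Ioi t) := by
      intro t
      refine ((exp_neg_integrableOn_Ioi t hδA).const_mul K).mono'
        hfmeas.aestronglyMeasurable ?_
      refine Filter.Eventually.of_forall (fun s => ?_)
      rw [Real.norm_eq_abs, abs_of_nonneg (hfnn s)]; exact hfbd s
    set H : ℝ → ℝ := fun t => ∫ s in Ioi t, f s with hHdef
    have hHt : ∀ t, H t = ∫ s in Ioi t, f s := fun _ => rfl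
    have hHnn : ∀ t, 0 ≤ H t := fun t =>
      setIntegral_nonneg measurableSet_Ioi (fun s _ => hfnn s)
    have hHanti : Antitone H := by
      intro s t hst
      exact setIntegral_mono_set (hfint s) (Filter.Eventually.of_forall hfnn)
        (HasSubset.Subset.eventuallyLE (Ioi_subset_Ioi hst))
    have hHmeas : Measurable H := hHanti.measurable
    have hHbd : ∀ t, H t ≤ K * (Real.exp (-δA * t) / δA) := by
      intro t
      have h1 : H t ≤ ∫ s in Ioi t, K * Real.exp (-δA * s) := by
        rw [hHt]
        exact integral_mono (hfint t) ((exp_neg_integrableOn_Ioi t hδA).const_mul K)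
          (fun s => hfbd s)
      rwa [integral_const_mul, exp_int δA hδA t] at h1
    have hrel : ∀ t, 0 ≤ t → (∫ s in Ioi t, (ℓ * G1 s + G0 s) * Real.exp (-δA * (s - t)))
        = Real.exp (δA * t) * H t := by
      intro t ht
      have h1 : ∀ s ∈ Ioi t, (ℓ * G1 s + G0 s) * Real.exp (-δA * (s - t))
          = Real.exp (δA * t) * f s := by
        intro s hs
        have hs0 : (0:ℝ) ≤ s := le_trans ht (le_of_lt hs)
        rw [← hg1eq s hs0, ← hg0eq s hs0]
        rw [show -δA * (s - t) = δA * t + (-δA * s) by ring, Real.exp_add]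
        simp only [hfdef, hgAdef]
        ring
      rw [setIntegral_congr_fun measurableSet_Ioi h1, integral_const_mul, hHt]
    have hstar : ∀ t, 0 ≤ t →
        δA * v 1 * (Real.exp (δA * t) * H t) ≤ A * g1 t + B * g0 t := by
      intro t ht
      rcases eq_or_lt_of_le (hgAnn t) with hz | hzpos
      · have hgz : gA t = 0 := hz.symm
        have hq := hgz
        rw [hgAt] at hq
        have h41 : ℓ * g1 t = 0 :=
          le_antisymm (by linarith [hg0nn t]) (mul_nonneg hℓ.le (hg1nn t))
        have hg1z : g1 t = 0 := by
          rcases mul_eq_zero.1 h41 with h | h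
          · exact absurd h hℓ.ne'
          · exact h
        have hg0z : g0 t = 0 := by linarith
        have hHz : H t = 0 := by
          rw [hHt]
          have hzero : ∀ s ∈ Ioi t, f s = (0:ℝ) := by
            intro s hs
            have h2 : gA s ≤ 0 := hgz ▸ hgAanti (le_of_lt hs)
            have h3 : gA s = 0 := le_antisymm h2 (hgAnn s)
            rw [hfdef]; simp only
            rw [show gA s * Real.exp (-δA * s) = 0 * Real.exp (-δA * s) by rw [h3]]
            ring
          rw [setIntegral_congr_fun measurableSet_Ioi hzero]
          simp
        rw [hHz, hg1z, hg0z]; simp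
      · have hpos' : 0 < ℓ * G1 t + G0 t := by
          rw [← hg1eq t ht, ← hg0eq t ht]; exact hzpos
        have hob := hOb t ht hpos'
        rw [hrel t ht] at hob
        rw [← hg1eq t ht, ← hg0eq t ht] at hob
        rw [← hgAt t] at hob
        set x := ℓ * g1 t / gA t with hx
        have hx0 : 0 ≤ x := div_nonneg (mul_nonneg hℓ.le (hg1nn t)) (hgAnn t)
        have hx1 : x ≤ 1 := by
          rw [hx, div_le_one hzpos]
          have := hg0nn t
          rw [hgAt]; linarith
        have hxmem : x ∈ Icc (0:ℝ) 1 := ⟨hx0, hx1⟩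
        have htan : v μA + d * (x - μA) ≤ v x := by
          rcases lt_trichotomy x μA with hlt | heq | hgt
          · have hs := hconv.convexOn.slope_le_of_hasDerivWithinAt hxmem hmemA hlt
              (hderiv μA hmemA)
            rw [slope_def_field, ← hd] at hs
            have h2 : v μA - v x ≤ d * (μA - x) := by
              rwa [div_le_iff₀ (by linarith)] at hs
            have h3 : d * (x - μA) = -(d * (μA - x)) := by ring
            linarith
          · rw [heq]; simp
          · have hs := hconv.convexOn.le_slope_of_hasDerivWithinAt hmemA hxmem hgt
              (hderiv μA hmemA)
            rw [slope_def_field, ← hd] at hs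
            have h2 : d * (x - μA) ≤ v x - v μA := by
              rwa [le_div_iff₀ (by linarith)] at hs
            linarith
        have h5 : gA t * (v μA + d * (x - μA)) ≤ gA t * v x :=
          mul_le_mul_of_nonneg_left htan (hgAnn t)
        have h6 : gA t * x = ℓ * g1 t := by
          rw [hx]; field_simp
        have h7 : gA t * (v μA + d * (x - μA)) = (v μA - d * μA) * gA t + d * (ℓ * g1 t) := by
          rw [← h6]; ring
        have h8 : v 1 * gA t - ((v μA - d * μA) * gA t + d * (ℓ * g1 t))
            = A * g1 t + B * g0 t := by
          rw [hgAt, hA, hB]; ring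
        linarith [hob, h5, h7, h8]
    have hpt : ∀ t, 0 ≤ t →
        Real.exp (-δP * t) * (g1 t + g0 t)
          ≤ w0 * (δA * v 1) * (Real.exp (-δP * t) * gA t
              - (δA - δP) * (Real.exp ((δA - δP) * t) * H t)) := by
      intro t ht
      have h1 := hstar t ht
      have hE : Real.exp (-δP * t) * Real.exp (δA * t) = Real.exp ((δA - δP) * t) := by
        rw [← Real.exp_add]; congr 1; ring
      have h2 : w0 * (δA - δP) * Real.exp (-δP * t) * (δA * v 1 * (Real.exp (δA * t) * H t))
          ≤ w0 * (δA - δP) * Real.exp (-δP * t) * (A * g1 t + B * g0 t) :=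
        mul_le_mul_of_nonneg_left h1
          (mul_nonneg (mul_nonneg hw0pos.le hγ.le) (Real.exp_pos _).le)
      have hid : Real.exp (-δP * t) * (g1 t + g0 t)
          + w0 * (δA - δP) * Real.exp (-δP * t) * (A * g1 t + B * g0 t)
          = w0 * (δA * v 1) * (Real.exp (-δP * t) * gA t) := by
        rw [hgAt]
        linear_combination (-(Real.exp (-δP * t) * g1 t)) * hw1
          - (Real.exp (-δP * t) * g0 t) * hw2
      have h3 : w0 * (δA - δP) * Real.exp (-δP * t) * (δA * v 1 * (Real.exp (δA * t) * H t))
          = w0 * (δA * v 1) * ((δA - δP) * (Real.exp ((δA - δP) * t) * H t)) := by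
        rw [← hE]; ring
      linarith [h2, hid, h3]
    -- integrability
    have hint1 : IntegrableOn (fun t => Real.exp (-δP * t) * (g1 t + g0 t)) (Ioi (0:ℝ)) := by
      refine (exp_neg_integrableOn_Ioi 0 hδP).mono'
        ((Real.measurable_exp.comp (measurable_id.const_mul (-δP))).mul
          (hg1meas.add hg0meas)).aestronglyMeasurable ?_
      refine Filter.Eventually.of_forall (fun t => ?_)
      rw [Real.norm_eq_abs, abs_of_nonneg
        (mul_nonneg (Real.exp_pos _).le (add_nonneg (hg1nn t) (hg0nn t)))]
      have hb1 : g1 t + g0 t ≤ 1 := by linarith [hg1le t, hg0le t]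
      nlinarith [Real.exp_pos (-δP * t)]
    have hintEgA : IntegrableOn (fun t => Real.exp (-δP * t) * gA t) (Ioi (0:ℝ)) := by
      refine ((exp_neg_integrableOn_Ioi 0 hδP).const_mul K).mono'
        ((Real.measurable_exp.comp (measurable_id.const_mul (-δP))).mul
          hgAmeas).aestronglyMeasurable ?_
      refine Filter.Eventually.of_forall (fun t => ?_)
      rw [Real.norm_eq_abs, abs_of_nonneg (mul_nonneg (Real.exp_pos _).le (hgAnn t))]
      calc Real.exp (-δP * t) * gA t ≤ Real.exp (-δP * t) * K :=
            mul_le_mul_of_nonneg_left (hgAle t) (Real.exp_pos _).le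
        _ = K * Real.exp (-δP * t) := by ring
    have hintEH : IntegrableOn (fun t => Real.exp ((δA - δP) * t) * H t) (Ioi (0:ℝ)) := by
      refine ((exp_neg_integrableOn_Ioi 0 hδP).const_mul (K / δA)).mono'
        ((Real.measurable_exp.comp (measurable_id.const_mul (δA - δP))).mul
          hHmeas).aestronglyMeasurable ?_
      refine Filter.Eventually.of_forall (fun t => ?_)
      rw [Real.norm_eq_abs, abs_of_nonneg (mul_nonneg (Real.exp_pos _).le (hHnn t))]
      have h1 : Real.exp ((δA - δP) * t) * H t
          ≤ Real.exp ((δA - δP) * t) * (K * (Real.exp (-δA * t) / δA)) :=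
        mul_le_mul_of_nonneg_left (hHbd t) (Real.exp_pos _).le
      have h2 : Real.exp ((δA - δP) * t) * (K * (Real.exp (-δA * t) / δA))
          = K / δA * Real.exp (-δP * t) := by
        rw [show Real.exp ((δA - δP) * t) * (K * (Real.exp (-δA * t) / δA))
            = (K / δA) * (Real.exp ((δA - δP) * t) * Real.exp (-δA * t)) by ring,
          ← Real.exp_add]
        congr 2
        ring
      linarith
    have hintRHS : IntegrableOn (fun t => w0 * (δA * v 1) * (Real.exp (-δP * t) * gA t
        - (δA - δP) * (Real.exp ((δA - δP) * t) * H t))) (Ioi (0:ℝ)) :=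
      (hintEgA.sub (hintEH.const_mul (δA - δP))).const_mul (w0 * (δA * v 1))
    have hmono := setIntegral_mono_on hint1 hintRHS measurableSet_Ioi
      (fun t ht => hpt t (le_of_lt ht))
    -- evaluate the RHS integral
    have hsw := swap_lemma (δA - δP) δA K hγ (by linarith) f hfmeas hfnn hfbd
    have hsplit : ∫ s in Ioi (0:ℝ), f s * ((Real.exp ((δA - δP) * s) - 1) / (δA - δP))
        = (1 / (δA - δP)) * ((∫ s in Ioi (0:ℝ), Real.exp (-δP * s) * gA s) - H 0) := by
      have h1 : ∀ s : ℝ, f s * ((Real.exp ((δA - δP) * s) - 1) / (δA - δP))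
          = (1 / (δA - δP)) * (Real.exp (-δP * s) * gA s - f s) := by
        intro s
        have hE : Real.exp (-δA * s) * Real.exp ((δA - δP) * s) = Real.exp (-δP * s) := by
          rw [← Real.exp_add]; congr 1; ring
        rw [hfdef]; simp only
        set e1 := Real.exp (-δA * s) with he1
        set e2 := Real.exp ((δA - δP) * s) with he2
        set e3 := Real.exp (-δP * s) with he3
        field_simp
        linear_combination (gA s) * hE
      simp_rw [h1]
      rw [integral_const_mul, integral_sub hintEgA (hfint 0), hHt]
    have hRHSval : (∫ t in Ioi (0:ℝ), w0 * (δA * v 1) * (Real.exp (-δP * t) * gA t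
        - (δA - δP) * (Real.exp ((δA - δP) * t) * H t)))
        = w0 * (δA * v 1) * H 0 := by
      rw [integral_const_mul, integral_sub hintEgA (hintEH.const_mul (δA - δP)),
        integral_const_mul]
      have h2 : (∫ t in Ioi (0:ℝ), Real.exp ((δA - δP) * t) * H t)
          = (1 / (δA - δP)) * ((∫ s in Ioi (0:ℝ), Real.exp (-δP * s) * gA s) - H 0) := by
        have h3 : (∫ t in Ioi (0:ℝ), Real.exp ((δA - δP) * t) * H t)
            = ∫ t in Ioi (0:ℝ), Real.exp ((δA - δP) * t) * (∫ s in Ioi t, f s) := rfl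
        rw [h3, hsw]
        exact hsplit
      rw [h2]
      have h4 : (δA - δP) * ((1 / (δA - δP)) * ((∫ s in Ioi (0:ℝ), Real.exp (-δP * s) * gA s)
          - H 0)) = (∫ s in Ioi (0:ℝ), Real.exp (-δP * s) * gA s) - H 0 := by
        field_simp
      rw [h4]
      ring
    have hg10 : g1 0 = μP := by rw [hg1]; simp only [max_self]; exact hG10
    have hg00 : g0 0 = 1 - μP := by rw [hg0]; simp only [max_self]; exact hG00
    have hH0bd : δA * v 1 * H 0 ≤ A * μP + B * (1 - μP) := by
      have h1 := hstar 0 le_rfl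
      rw [mul_zero, Real.exp_zero, one_mul, hg10, hg00] at h1
      exact h1
    have hJeq : J δP G1 G0 = ∫ t in Ioi (0:ℝ), Real.exp (-δP * t) * (g1 t + g0 t) := by
      simp only [J]
      refine setIntegral_congr_fun measurableSet_Ioi (fun t ht => ?_)
      rw [hg1eq t (le_of_lt ht), hg0eq t (le_of_lt ht)]
    calc J δP G1 G0 = ∫ t in Ioi (0:ℝ), Real.exp (-δP * t) * (g1 t + g0 t) := hJeq
      _ ≤ ∫ t in Ioi (0:ℝ), w0 * (δA * v 1) * (Real.exp (-δP * t) * gA t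
            - (δA - δP) * (Real.exp ((δA - δP) * t) * H t)) := hmono
      _ = w0 * (δA * v 1) * H 0 := hRHSval
      _ ≤ w0 * (A * μP + B * (1 - μP)) := by
          have h9 := mul_le_mul_of_nonneg_left hH0bd hw0pos.le
          linarith [h9]
      _ = 1 / (δP + lam) := hfinal
      _ = J δP G1s G0s := hJs.symm
  exact ⟨hFeas, hEqOb, hOpt⟩


end
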